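/- Property (D) implies square-summable normalized boundary volumes: let V ∈ C²(ℝ_{≥0}) be positive and increasing with V'(r)/V(r) ∈ L²([1,∞)) and V''(r)/V'(r) → 0 as r → ∞, and V' > 0. Then for every h > 0 the sequence k ↦ sup_{s∈[0,h]} V'(k+1+s) / V(k+1) is in ℓ²(ℕ). -/

import Mathlib

open Filter MeasureTheory Set
set_option maxHeartbeats 1000000

/-- Property (D) implies square-summable normalized boundary volumes: let `V` be positive on
`[0, ∞)` and twice differentiable on `(0, ∞)` with derivative `V'` and second derivative
`V''`, with `V' > 0`, `V'/V ∈ L²([1, ∞))` and `V''(r)/V'(r) → 0` as `r → ∞`.  Then for every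
`h > 0` the sequence `k ↦ (sup_{s ∈ [0,h]} V'(k+1+s)) / V(k+1)` is square-summable. -/
theorem stmt_18 (V V' V'' : ℝ → ℝ)
    (hD1 : ∀ x : ℝ, 0 < x → HasDerivAt V (V' x) x)
    (hD2 : ∀ x : ℝ, 0 < x → HasDerivAt V' (V'' x) x)
    (hcont : ContinuousOn V'' (Set.Ioi 0))
    (hVpos : ∀ x : ℝ, 0 ≤ x → 0 < V x)
    (hV'pos : ∀ x : ℝ, 0 < x → 0 < V' x)
    (hL2 : MeasureTheory.IntegrableOn (fun r => (V' r / V r) ^ 2) (Set.Ici 1))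
    (hlim : Tendsto (fun r => V'' r / V' r) atTop (nhds 0)) :
    ∀ h : ℝ, 0 < h →
      Summable (fun k : ℕ =>
        ((⨆ s ∈ Set.Icc (0:ℝ) h, V' ((k : ℝ) + 1 + s)) / V ((k : ℝ) + 1)) ^ 2) := by
  intro h hh
  -- get the threshold beyond which |V''/V'| ≤ 1
  obtain ⟨R₀, hR₀⟩ : ∃ R, ∀ r ≥ R, |V'' r / V' r| ≤ 1 := by
    obtain ⟨N, hN⟩ := (Metric.tendsto_atTop.mp hlim 1 one_pos)
    exact ⟨N, fun r hr => by
      have := (hN r hr).le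
      rwa [Real.dist_eq, sub_zero] at this⟩
  set R : ℝ := max R₀ 1 with hRdef
  have hR1 : (1:ℝ) ≤ R := le_max_right _ _
  have hRbound : ∀ r, R ≤ r → |V'' r / V' r| ≤ 1 :=
    fun r hr => hR₀ r (le_trans (le_max_left _ _) hr)
  -- growth lemma: V' grows at most exponentially past R
  have growth : ∀ x y : ℝ, R ≤ x → x ≤ y → V' y ≤ V' x * Real.exp (y - x) := by
    intro x y hx hxy
    have hpos : ∀ t ∈ Icc x y, 0 < t := fun t ht =>
      lt_of_lt_of_le one_pos (le_trans hR1 (le_trans hx ht.1))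
    have key : ‖Real.log (V' y) - Real.log (V' x)‖ ≤ 1 * ‖y - x‖ := by
      refine (convex_Icc x y).norm_image_sub_le_of_norm_hasDerivWithin_le
        (f := fun t => Real.log (V' t)) (f' := fun t => V'' t / V' t)
        (fun t ht => ((hD2 t (hpos t ht)).log (hV'pos t (hpos t ht)).ne').hasDerivWithinAt)
        (fun t ht => by rw [Real.norm_eq_abs]; exact hRbound t (le_trans hx ht.1))
        (left_mem_Icc.2 hxy) (right_mem_Icc.2 hxy)
    have hlog : Real.log (V' y) ≤ Real.log (V' x) + (y - x) := by
      have := (abs_le.mp (by simpa [Real.norm_eq_abs, abs_of_nonneg (sub_nonneg.2 hxy)] using key)).2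
      linarith
    have hx0 : 0 < x := hpos x (left_mem_Icc.2 hxy)
    have hy0 : 0 < y := hpos y (right_mem_Icc.2 hxy)
    calc V' y = Real.exp (Real.log (V' y)) := (Real.exp_log (hV'pos y hy0)).symm
      _ ≤ Real.exp (Real.log (V' x) + (y - x)) := Real.exp_le_exp.2 hlog
      _ = V' x * Real.exp (y - x) := by rw [Real.exp_add, Real.exp_log (hV'pos x hx0)]
  -- monotonicity of V on (0, ∞)
  have hVmono : ∀ a b : ℝ, 0 < a → a ≤ b → V a ≤ V b := by
    have hsm : StrictMonoOn V (Ioi 0) := by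
      refine strictMonoOn_of_deriv_pos (convex_Ioi 0)
        (fun x hx => (hD1 x hx).continuousAt.continuousWithinAt) (fun x hx => ?_)
      rw [interior_Ioi] at hx
      rw [(hD1 x hx).deriv]
      exact hV'pos x hx
    intro a b ha hab
    exact hsm.monotoneOn (Set.mem_Ioi.2 ha) (Set.mem_Ioi.2 (lt_of_lt_of_le ha hab)) hab
  set K : ℕ := ⌈R⌉₊ with hKdef
  have hKR : R ≤ (K : ℝ) := Nat.le_ceil R
  have hK1 : (1:ℝ) ≤ (K : ℝ) := le_trans hR1 hKR
  set C : ℝ := Real.exp (h + 1) with hCdef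
  have hC0 : 0 < C := Real.exp_pos _
  set g : ℝ → ℝ := fun t => C ^ 2 * (V' t / V t) ^ 2 with hgdef
  have hg_int : IntegrableOn g (Set.Ici 1) := hL2.const_mul _
  have hg_nonneg : ∀ t, 0 ≤ g t := fun t =>
    mul_nonneg (sq_nonneg _) (sq_nonneg _)
  set T : ℕ → ℝ := fun k =>
    ((⨆ s ∈ Set.Icc (0:ℝ) h, V' ((k : ℝ) + 1 + s)) / V ((k : ℝ) + 1)) ^ 2 with hTdef
  -- pointwise bound
  have key : ∀ k : ℕ, (K : ℝ) ≤ k → ∀ t ∈ Set.Ioc (k : ℝ) ((k : ℝ) + 1), T k ≤ g t := by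
    intro k hk t ht
    have ht0 : (0:ℝ) < t := lt_of_lt_of_le one_pos (le_trans hK1 (le_trans hk ht.1.le))
    have htR : R ≤ t := le_trans hKR (le_trans hk ht.1.le)
    have hVt := hV'pos t ht0
    have hSup : (⨆ s ∈ Set.Icc (0:ℝ) h, V' ((k : ℝ) + 1 + s)) ≤ C * V' t := by
      have hCV : 0 ≤ C * V' t := mul_nonneg hC0.le hVt.le
      refine Real.iSup_le (fun s => Real.iSup_le (fun hs => ?_) hCV) hCV
      have h1 : V' ((k : ℝ) + 1 + s) ≤ V' t * Real.exp ((k : ℝ) + 1 + s - t) :=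
        growth t _ htR (by nlinarith [hs.1, ht.2])
      have h2 : Real.exp ((k : ℝ) + 1 + s - t) ≤ C := by
        rw [hCdef]
        exact Real.exp_le_exp.2 (by nlinarith [hs.2, ht.1])
      calc V' ((k : ℝ) + 1 + s) ≤ V' t * Real.exp ((k : ℝ) + 1 + s - t) := h1
        _ ≤ V' t * C := by nlinarith
        _ = C * V' t := mul_comm _ _
    have hVk : (0:ℝ) < V ((k : ℝ) + 1) := hVpos _ (by positivity)
    have hVt0 : 0 < V t := hVpos t ht0.le
    have hVle : V t ≤ V ((k : ℝ) + 1) := hVmono t _ ht0 (ht.2)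
    have hdiv : (⨆ s ∈ Set.Icc (0:ℝ) h, V' ((k : ℝ) + 1 + s)) / V ((k : ℝ) + 1)
        ≤ C * V' t / V t :=
      div_le_div₀ (by positivity) hSup hVt0 hVle
    have hnn : 0 ≤ (⨆ s ∈ Set.Icc (0:ℝ) h, V' ((k : ℝ) + 1 + s)) / V ((k : ℝ) + 1) := by
      refine div_nonneg ?_ hVk.le
      refine Real.iSup_nonneg fun s => Real.iSup_nonneg fun hs => (hV'pos _ ?_).le
      have hk0 : (0:ℝ) ≤ (k:ℝ) := Nat.cast_nonneg k
      linarith [hs.1]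
    have := pow_le_pow_left₀ hnn hdiv 2
    calc T k ≤ (C * V' t / V t) ^ 2 := this
      _ = g t := by rw [hgdef]; ring
  -- each term is bounded by the integral of g over the adjacent interval
  have key2 : ∀ k : ℕ, (K : ℝ) ≤ k →
      T k ≤ ∫ t in Set.Ioc (k : ℝ) ((k : ℝ) + 1), g t := by
    intro k hk
    have hsub : Set.Ioc (k : ℝ) ((k : ℝ) + 1) ⊆ Set.Ici 1 := fun t ht =>
      le_trans hK1 (le_trans hk ht.1.le)
    have hgint : IntegrableOn g (Set.Ioc (k : ℝ) ((k : ℝ) + 1)) := hg_int.mono_set hsub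
    have hvol : (volume (Set.Ioc (k : ℝ) ((k : ℝ) + 1))).toReal = 1 := by
      simp [Real.volume_Ioc]
    calc T k = (volume (Set.Ioc (k : ℝ) ((k : ℝ) + 1))).toReal • T k := by rw [hvol]; simp
      _ = ∫ _t in Set.Ioc (k : ℝ) ((k : ℝ) + 1), T k := (setIntegral_const _).symm
      _ ≤ ∫ t in Set.Ioc (k : ℝ) ((k : ℝ) + 1), g t := by
          refine setIntegral_mono_on (integrableOn_const ?_) hgint
            measurableSet_Ioc (key k hk)
          simp [Real.volume_Ioc]
  -- summability of the shifted sequence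
  have hshift : Summable fun k : ℕ => T (k + K) := by
    refine summable_of_sum_range_le (c := ∫ t in Set.Ici 1, g t)
      (fun k => sq_nonneg _) (fun n => ?_)
    set a : ℕ → ℝ := fun i => (K : ℝ) + i with hadef
    have hstep : ∀ i : ℕ, T (i + K) ≤ ∫ t in (a i)..(a (i + 1)), g t := by
      intro i
      have hi0 : (0:ℝ) ≤ (i:ℝ) := Nat.cast_nonneg i
      have hb := key2 (i + K) (by push_cast; linarith)
      have e1 : ((i + K : ℕ) : ℝ) = (K : ℝ) + i := by push_cast; ring
      rw [e1] at hb
      rw [intervalIntegral.integral_of_le (by simp [hadef])]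
      have e2 : a i = (K:ℝ) + i := rfl
      have e3 : a (i + 1) = ((K:ℝ) + i) + 1 := by simp [hadef]; push_cast; ring
      rw [e2, e3]
      exact hb
    have hint : ∀ i : ℕ, i < n → IntervalIntegrable g volume (a i) (a (i + 1)) := by
      intro i _
      have hi0 : (0:ℝ) ≤ (i:ℝ) := Nat.cast_nonneg i
      have e3 : a (i + 1) = ((K:ℝ) + i) + 1 := by simp [hadef]; push_cast; ring
      rw [e3, intervalIntegrable_iff_integrableOn_Ioc_of_le (by simp [hadef])]
      refine hg_int.mono_set (fun t ht => ?_)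
      have : (K:ℝ) + i < t := by simpa [hadef] using ht.1
      simp only [Set.mem_Ici]
      linarith
    have hadj := intervalIntegral.sum_integral_adjacent_intervals (a := a) (μ := volume) hint
    have hn0 : (0:ℝ) ≤ (n:ℝ) := Nat.cast_nonneg n
    calc ∑ i ∈ Finset.range n, T (i + K)
        ≤ ∑ i ∈ Finset.range n, ∫ t in (a i)..(a (i + 1)), g t :=
          Finset.sum_le_sum (fun i _ => hstep i)
      _ = ∫ t in (a 0)..(a n), g t := hadj
      _ = ∫ t in Set.Ioc ((K : ℝ)) ((K : ℝ) + n), g t := by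
          rw [intervalIntegral.integral_of_le (by simp [hadef])]
          simp [hadef]
      _ ≤ ∫ t in Set.Ici 1, g t := by
          refine setIntegral_mono_set hg_int (Filter.Eventually.of_forall hg_nonneg)
            (HasSubset.Subset.eventuallyLE fun t ht => ?_)
          have : (K:ℝ) < t := ht.1
          simp only [Set.mem_Ici]
          linarith
  exact (summable_nat_add_iff K).mp hshift
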